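/- Let (G,X) be a G-system, x ∈ X, and F = (F_n)_{n∈D} a Følner net in G. Then the set C_F(x) = {y ∈ X : d̄_F(N(x,U)) > 0 for every open neighborhood U of y} is a closed F-center of attraction of x, and every closed F-center of attraction of x contains C_F(x). Consequently C_F(x) is the unique minimal (under inclusion) closed F-center of attraction of x; in particular a minimal F-center of attraction of x relative to F always exists. -/

import Mathlib

open Filter Metric Set

section Defs

variable {G : Type*} [Group G] [DecidableEq G]
variable {D : Type*} [Preorder D]

/-- `F` is a (left) Følner net in `G`. -/
def IsFolnerNet (F : D → Finset G) : Prop :=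
  (∀ n, (F n).Nonempty) ∧
    ∀ g : G,
      Tendsto (fun n : D =>
          ((symmDiff ((F n).image fun h => g * h) (F n)).card : ℝ) / (F n).card)
        atTop (nhds 0)

/-- Upper density of `A ⊆ G` relative to the net `F`. -/
noncomputable def upperDensity (F : D → Finset G) (A : Set G) : ℝ :=
  sSup {α : ℝ | ∀ m : D, ∃ n : D, m ≤ n ∧
    α ≤ (((F n : Set G) ∩ A).ncard : ℝ) / (F n).card}

variable {X : Type*} [MetricSpace X] [MulAction G X]

/-- The minimal `F`-center of attraction of `x`. -/
def minCenter (F : D → Finset G) (x : X) : Set X :=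
  {y : X | ∀ U : Set X, IsOpen U → y ∈ U → 0 < upperDensity F {g : G | g • x ∈ U}}

/-- A closed set `C` is an `F`-center of attraction of `x` if for every `ε > 0` the set
`N(x, B_ε(C))` has `F`-density `1`. -/
def IsCenterOfAttraction (F : D → Finset G) (x : X) (C : Set X) : Prop :=
  IsClosed C ∧ ∀ ε : ℝ, 0 < ε →
    Tendsto (fun n : D =>
        (((F n : Set G) ∩ {g : G | g • x ∈ Metric.thickening ε C}).ncard : ℝ) / (F n).card)
      atTop (nhds 1)

end Defs


section H
variable {G : Type*} [Group G] [DecidableEq G]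
variable {D : Type*} [Preorder D] [IsDirected D (· ≤ ·)] [Nonempty D]

set_option linter.unusedSectionVars false

noncomputable def myRatio (F : D → Finset G) (A : Set G) (n : D) : ℝ :=
  (((F n : Set G) ∩ A).ncard : ℝ) / (F n).card

lemma myRatio_nonneg (F : D → Finset G) (A : Set G) (n : D) : 0 ≤ myRatio F A n :=
  div_nonneg (by positivity) (by positivity)

lemma ncard_inter_le (F : D → Finset G) (A : Set G) (n : D) :
    ((F n : Set G) ∩ A).ncard ≤ (F n).card := by
  rw [← Set.ncard_coe_finset (F n)]
  exact Set.ncard_le_ncard inter_subset_left (F n).finite_toSet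

lemma myRatio_le_one (F : D → Finset G) (hF : ∀ n, (F n).Nonempty) (A : Set G) (n : D) :
    myRatio F A n ≤ 1 := by
  have hc : (0:ℝ) < (F n).card := by
    exact_mod_cast Finset.card_pos.2 (hF n)
  rw [myRatio, div_le_one hc]
  exact_mod_cast ncard_inter_le F A n

lemma zero_mem_S (F : D → Finset G) (A : Set G) :
    (0:ℝ) ∈ {α : ℝ | ∀ m : D, ∃ n : D, m ≤ n ∧
      α ≤ (((F n : Set G) ∩ A).ncard : ℝ) / (F n).card} :=
  fun m => ⟨m, le_refl m, myRatio_nonneg F A m⟩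

lemma S_bddAbove (F : D → Finset G) (hF : ∀ n, (F n).Nonempty) (A : Set G) :
    BddAbove {α : ℝ | ∀ m : D, ∃ n : D, m ≤ n ∧
      α ≤ (((F n : Set G) ∩ A).ncard : ℝ) / (F n).card} := by
  refine ⟨1, fun α hα => ?_⟩
  obtain ⟨m⟩ : Nonempty D := inferInstance
  obtain ⟨n, _, hn⟩ := hα m
  exact hn.trans (myRatio_le_one F hF A n)

/-- If the upper density is not positive, the ratio is eventually `< α` for every `α > 0`. -/
lemma eventually_ratio_lt (F : D → Finset G) (hF : ∀ n, (F n).Nonempty) (A : Set G)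
    (h : ¬ 0 < upperDensity F A) {α : ℝ} (hα : 0 < α) :
    ∀ᶠ n in (atTop : Filter D), myRatio F A n < α := by
  rw [eventually_atTop]
  by_contra hc
  push_neg at hc
  have hmem : α ∈ {β : ℝ | ∀ m : D, ∃ n : D, m ≤ n ∧
      β ≤ (((F n : Set G) ∩ A).ncard : ℝ) / (F n).card} := by
    intro m
    obtain ⟨n, hn, hge⟩ := hc m
    exact ⟨n, hn, hge⟩
  have := le_csSup (S_bddAbove F hF A) hmem
  rw [upperDensity] at h
  exact h (lt_of_lt_of_le hα this)

/-- If the upper density is positive, frequently the ratio is `≥ α` for some `α > 0`. -/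
lemma frequently_ratio_ge (F : D → Finset G) (A : Set G)
    (h : 0 < upperDensity F A) :
    ∃ α : ℝ, 0 < α ∧ ∃ᶠ n in (atTop : Filter D), α ≤ myRatio F A n := by
  rw [upperDensity] at h
  obtain ⟨α, hαS, hα⟩ := exists_lt_of_lt_csSup ⟨0, zero_mem_S F A⟩ h
  refine ⟨α, hα, ?_⟩
  rw [frequently_atTop]
  intro m
  obtain ⟨n, hn, hge⟩ := hαS m
  exact ⟨n, hn, hge⟩

lemma ncard_inter_union_le (F : D → Finset G) (n : D) (A B : Set G) :
    ((F n : Set G) ∩ (A ∪ B)).ncard ≤ ((F n : Set G) ∩ A).ncard + ((F n : Set G) ∩ B).ncard := by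
  rw [Set.inter_union_distrib_left]
  exact Set.ncard_union_le _ _

lemma ncard_inter_compl (F : D → Finset G) (n : D) (A : Set G) :
    ((F n : Set G) ∩ A).ncard + ((F n : Set G) ∩ Aᶜ).ncard = (F n).card := by
  rw [← Set.ncard_union_eq (Set.disjoint_left.2 fun g hg hg' => hg'.2 hg.2)
    ((F n).finite_toSet.inter_of_left A) ((F n).finite_toSet.inter_of_left Aᶜ),
    ← Set.inter_union_distrib_left, Set.union_compl_self, Set.inter_univ,
    Set.ncard_coe_finset]

lemma ncard_inter_add_le (F : D → Finset G) (n : D) {A B : Set G} (hAB : Disjoint A B) :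
    ((F n : Set G) ∩ A).ncard + ((F n : Set G) ∩ B).ncard ≤ (F n).card := by
  rw [← Set.ncard_union_eq (hAB.mono inter_subset_right inter_subset_right)
    ((F n).finite_toSet.inter_of_left A) ((F n).finite_toSet.inter_of_left B),
    ← Set.inter_union_distrib_left, ← Set.ncard_coe_finset (F n)]
  exact Set.ncard_le_ncard inter_subset_left (F n).finite_toSet


lemma myRatio_mono (F : D → Finset G) (n : D) {A B : Set G} (h : A ⊆ B) :
    myRatio F A n ≤ myRatio F B n := by
  rcases Nat.eq_zero_or_pos (F n).card with h0 | h0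
  · simp [myRatio, h0]
  · have hc : (0:ℝ) < (F n).card := by exact_mod_cast h0
    rw [myRatio, myRatio, div_le_div_iff_of_pos_right hc]
    exact_mod_cast Set.ncard_le_ncard (Set.inter_subset_inter_right _ h)
      ((F n).finite_toSet.inter_of_left B)

lemma myRatio_biUnion_le {ι : Type*} (F : D → Finset G) (n : D) (t : Finset ι) (A : ι → Set G) :
    myRatio F (⋃ i ∈ t, A i) n ≤ ∑ i ∈ t, myRatio F (A i) n := by
  classical
  induction t using Finset.induction_on with
  | empty => simp [myRatio]
  | insert a s hnot ih =>
    rw [Finset.sum_insert hnot, Finset.set_biUnion_insert]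
    calc myRatio F (A a ∪ ⋃ i ∈ s, A i) n
        ≤ myRatio F (A a) n + myRatio F (⋃ i ∈ s, A i) n := by
          rw [myRatio, myRatio, myRatio, ← add_div]
          rcases Nat.eq_zero_or_pos (F n).card with h0 | h0
          · simp [h0]
          · have hc : (0:ℝ) < (F n).card := by exact_mod_cast h0
            rw [div_le_div_iff_of_pos_right hc]
            exact_mod_cast ncard_inter_union_le F n (A a) (⋃ i ∈ s, A i)
      _ ≤ myRatio F (A a) n + ∑ i ∈ s, myRatio F (A i) n := by linarith [ih]

lemma myRatio_add_le_one (F : D → Finset G) (hF : ∀ n, (F n).Nonempty) (n : D)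
    {A B : Set G} (h : Disjoint A B) :
    myRatio F A n + myRatio F B n ≤ 1 := by
  have hc : (0:ℝ) < (F n).card := by exact_mod_cast Finset.card_pos.2 (hF n)
  rw [myRatio, myRatio, ← add_div, div_le_one hc]
  exact_mod_cast ncard_inter_add_le F n h


end H

/-- Lemma 1.2: `C_F(x)` is a closed `F`-center of attraction of `x`, every closed `F`-center
of attraction of `x` contains it, and it is the unique minimal such set. -/
theorem minCenter_isCenterOfAttraction_and_minimal
    {G : Type*} [Group G] [Infinite G] [DecidableEq G]
    {D : Type*} [Preorder D] [IsDirected D (· ≤ ·)] [Nonempty D]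
    {X : Type*} [MetricSpace X] [CompactSpace X] [MulAction G X]
    (hcont : ∀ g : G, Continuous fun y : X => g • y)
    (Fol : D → Finset G) (hFol : IsFolnerNet Fol) (x : X) :
    IsCenterOfAttraction Fol x (minCenter Fol x) ∧
    (∀ C : Set X, IsCenterOfAttraction Fol x C → minCenter Fol x ⊆ C) ∧
    (∀ C : Set X, IsCenterOfAttraction Fol x C →
      (∀ C' : Set X, C' ⊆ C → IsCenterOfAttraction Fol x C' → C' = C) →
      C = minCenter Fol x) := by
  obtain ⟨hFne, -⟩ := hFol
  set C := minCenter Fol x with hCdef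
  have hout : ∀ y : X, y ∉ C → ∃ U : Set X, IsOpen U ∧ y ∈ U ∧
      ¬ 0 < upperDensity Fol {g : G | g • x ∈ U} := by
    intro y hy
    rw [hCdef, minCenter, Set.mem_setOf_eq] at hy
    push_neg at hy
    obtain ⟨U, hU1, hU2, hU3⟩ := hy
    exact ⟨U, hU1, hU2, not_lt.2 hU3⟩
  -- C is closed
  have hclosed : IsClosed C := by
    rw [← isOpen_compl_iff, isOpen_iff_forall_mem_open]
    intro y hy
    obtain ⟨U, hUo, hyU, hUd⟩ := hout y hy
    exact ⟨U, fun z hz hzC => hUd (hzC U hUo hz), hUo, hyU⟩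
  -- C is a center of attraction
  have hattr : ∀ ε : ℝ, 0 < ε → Tendsto (fun n : D =>
      (((Fol n : Set G) ∩ {g : G | g • x ∈ Metric.thickening ε C}).ncard : ℝ) / (Fol n).card)
      atTop (nhds 1) := by
    intro ε hε
    set K := (Metric.thickening ε C)ᶜ with hKdef
    -- K is compact and disjoint from C
    have hKc : IsCompact K := (Metric.isOpen_thickening.isClosed_compl).isCompact
    have hKsub : ∀ y ∈ K, y ∉ C := fun y hy hyC =>
      hy (Metric.self_subset_thickening hε C hyC)
    -- choose neighbourhoods with non-positive upper density
    choose U hUo hyU hUd using fun (y : K) => hout y (hKsub y y.2)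
    obtain ⟨t, ht⟩ := hKc.elim_finite_subcover U hUo
      (fun y hy => Set.mem_iUnion.2 ⟨⟨y, hy⟩, hyU ⟨y, hy⟩⟩)
    -- key : the density of visits to K tends to 0
    have key : Tendsto (fun n => myRatio Fol {g : G | g • x ∈ K} n) atTop (nhds 0) := by
      rw [Metric.tendsto_nhds]
      intro δ hδ
      have hα : (0:ℝ) < δ / (t.card + 1) := by positivity
      have hev : ∀ᶠ n in (atTop : Filter D), ∀ i ∈ t,
          myRatio Fol {g : G | g • x ∈ U i} n < δ / (t.card + 1) := by
        rw [eventually_all_finset]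
        intro i _
        exact eventually_ratio_lt Fol hFne _ (hUd i) hα
      filter_upwards [hev] with n hn
      rw [Real.dist_eq, sub_zero, abs_of_nonneg (myRatio_nonneg _ _ _)]
      have hsub : {g : G | g • x ∈ K} ⊆ ⋃ i ∈ t, {g : G | g • x ∈ U i} := by
        intro g hg
        obtain ⟨i, hit, hgU⟩ := Set.mem_iUnion₂.1 (ht hg)
        exact Set.mem_iUnion₂.2 ⟨i, hit, hgU⟩
      calc myRatio Fol {g : G | g • x ∈ K} n
          ≤ myRatio Fol (⋃ i ∈ t, {g : G | g • x ∈ U i}) n := myRatio_mono Fol n hsub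
        _ ≤ ∑ i ∈ t, myRatio Fol {g : G | g • x ∈ U i} n := myRatio_biUnion_le Fol n t _
        _ ≤ ∑ _i ∈ t, δ / (t.card + 1) := Finset.sum_le_sum (fun i hi => (hn i hi).le)
        _ = t.card * (δ / (t.card + 1)) := by rw [Finset.sum_const, nsmul_eq_mul]
        _ < δ := by
            rw [mul_div_assoc']
            rw [div_lt_iff₀ (by positivity)]
            nlinarith [Nat.cast_nonneg (α := ℝ) t.card]
    have heq : ∀ n : D,
        (((Fol n : Set G) ∩ {g : G | g • x ∈ Metric.thickening ε C}).ncard : ℝ) / (Fol n).card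
          = 1 - myRatio Fol {g : G | g • x ∈ K} n := by
      intro n
      have hcard : (0:ℝ) < (Fol n).card := by exact_mod_cast Finset.card_pos.2 (hFne n)
      have hcompl : {g : G | g • x ∈ K} = {g : G | g • x ∈ Metric.thickening ε C}ᶜ := by
        ext g; simp [hKdef]
      have h1 := ncard_inter_compl Fol n {g : G | g • x ∈ Metric.thickening ε C}
      have h2 : (((Fol n : Set G) ∩ {g : G | g • x ∈ Metric.thickening ε C}).ncard : ℝ)
          + (((Fol n : Set G) ∩ {g : G | g • x ∈ Metric.thickening ε C}ᶜ).ncard : ℝ)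
          = (Fol n).card := by exact_mod_cast h1
      rw [myRatio, hcompl]
      field_simp
      linarith
    simp only [heq]
    simpa using key.const_sub 1
  -- minimality
  have hmin : ∀ B : Set X, IsCenterOfAttraction Fol x B → C ⊆ B := by
    intro B hB y hyC
    by_contra hyB
    rcases B.eq_empty_or_nonempty with hBe | hBne
    · have h1 := hB.2 1 one_pos
      have h0 : Tendsto (fun _ : D => (0:ℝ)) atTop (nhds 1) := by
        refine h1.congr fun n => ?_
        rw [hBe, Metric.thickening_empty]
        simp
      have h10 : (1:ℝ) = 0 := tendsto_nhds_unique h0 tendsto_const_nhds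
      norm_num at h10
    · have hd0 : 0 < infDist y B := (hB.1.notMem_iff_infDist_pos hBne).1 hyB
      set ε := infDist y B / 2 with hεdef
      have hε : 0 < ε := by positivity
      have hyball : y ∈ ball y ε := mem_ball_self hε
      obtain ⟨α, hα, hfreq⟩ := frequently_ratio_ge Fol {g : G | g • x ∈ ball y ε}
        (hyC (ball y ε) isOpen_ball hyball)
      have hT := hB.2 ε hε
      have hT' : Tendsto (fun n => myRatio Fol {g : G | g • x ∈ Metric.thickening ε B} n)
          atTop (nhds 1) := hT
      have hev := (Metric.tendsto_nhds.1 hT') (α / 2) (by positivity)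
      obtain ⟨n, hge, hlt⟩ := (hfreq.and_eventually hev).exists
      have hdisj : Disjoint {g : G | g • x ∈ ball y ε}
          {g : G | g • x ∈ Metric.thickening ε B} := by
        rw [Set.disjoint_left]
        intro g hg1 hg2
        rw [Set.mem_setOf_eq, mem_ball] at hg1
        rw [Set.mem_setOf_eq, Metric.mem_thickening_iff_infDist_lt hBne] at hg2
        have htri := infDist_le_infDist_add_dist (x := y) (y := g • x) (s := B)
        rw [dist_comm] at hg1
        rw [hεdef] at hg1 hg2
        linarith
      have hsum := myRatio_add_le_one Fol hFne n hdisj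
      rw [Real.dist_eq, abs_lt] at hlt
      linarith
  refine ⟨⟨hclosed, hattr⟩, hmin, ?_⟩
  intro B hB hBmin
  exact (hBmin C (hmin B hB) ⟨hclosed, hattr⟩).symm
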